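/- Let A be a square Z^+-matrix of order K satisfying the Hawkins-Simon condition (all leading principal minors positive). Then for any nonnegative vector y ∈ R^K there exists a nonnegative vector x ∈ R^K with Ax = y. -/

import Mathlib

private lemma hs_aux : ∀ K : ℕ, ∀ A : Matrix (Fin K) (Fin K) ℝ,
    (∀ i j, i ≠ j → A i j ≤ 0) →
    (∀ k : ℕ, ∀ h : k ≤ K, 0 < (A.submatrix (Fin.castLE h) (Fin.castLE h)).det) →
    ∀ y : Fin K → ℝ, (∀ i, 0 ≤ y i) →
    ∃ x : Fin K → ℝ, (∀ i, 0 ≤ x i) ∧ A.mulVec x = y := by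
  intro K
  induction K with
  | zero =>
      intro A _ _ y _
      exact ⟨0, fun i => i.elim0, funext fun i => i.elim0⟩
  | succ K ih =>
      intro A hoff hHS y hy
      have ha00 : 0 < A 0 0 := by
        have h1 := hHS 1 (by omega)
        rwa [Matrix.det_fin_one, Matrix.submatrix_apply] at h1
      have ha00' : A 0 0 ≠ 0 := ne_of_gt ha00
      set B : Matrix (Fin K) (Fin K) ℝ :=
        fun i j => A i.succ j.succ - A i.succ 0 * A 0 j.succ / A 0 0 with hB
      -- key minor identity
      have hminor : ∀ k : ℕ, ∀ hk : k ≤ K, ∀ hk1 : k + 1 ≤ K + 1,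
          (A.submatrix (Fin.castLE hk1) (Fin.castLE hk1)).det
          = A 0 0 * (B.submatrix (Fin.castLE hk) (Fin.castLE hk)).det := by
        intro k hk hk1
        set A' : Matrix (Fin (k+1)) (Fin (k+1)) ℝ :=
          A.submatrix (Fin.castLE hk1) (Fin.castLE hk1) with hA'
        have h0 : Fin.castLE hk1 (0 : Fin (k+1)) = (0 : Fin (K+1)) := Fin.ext rfl
        have hA'00 : A' 0 0 = A 0 0 := by rw [hA', Matrix.submatrix_apply, h0]
        have hA'00' : A' 0 0 ≠ 0 := by rw [hA'00]; exact ha00'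
        set C : Matrix (Fin (k+1)) (Fin (k+1)) ℝ :=
          fun i j => if i = 0 then A' 0 j else A' i j - A' i 0 * A' 0 j / A' 0 0 with hC
        have hdetAC : A'.det = C.det := by
          apply Matrix.det_eq_of_forall_row_eq_smul_add_const
            (fun i => if i = 0 then 0 else A' i 0 / A' 0 0) 0 (by simp)
          intro i j
          by_cases hi : i = 0
          · simp [hC, hi]
          · simp only [hC, if_neg hi]
            field_simp
            simp only [↓reduceIte]
            ring
        have hsub : C.submatrix Fin.succ Fin.succ
            = B.submatrix (Fin.castLE hk) (Fin.castLE hk) := by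
          ext i j
          have h1 : Fin.castLE hk1 (Fin.succ i) = Fin.succ (Fin.castLE hk i) :=
            Fin.ext rfl
          have h2 : Fin.castLE hk1 (Fin.succ j) = Fin.succ (Fin.castLE hk j) :=
            Fin.ext rfl
          show C (Fin.succ i) (Fin.succ j) = B (Fin.castLE hk i) (Fin.castLE hk j)
          simp only [Matrix.submatrix_apply, hC, hB, hA', if_neg (Fin.succ_ne_zero i),
            h1, h2, h0, hA'00]
        have hdetC : C.det = A 0 0 * (C.submatrix Fin.succ Fin.succ).det := by
          rw [Matrix.det_succ_column_zero, Fin.sum_univ_succ]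
          have hz : ∀ i : Fin k, C i.succ 0 = 0 := by
            intro i
            simp only [hC, if_neg (Fin.succ_ne_zero i)]
            field_simp
            simp
          simp only [hz, mul_zero, zero_mul, Finset.sum_const_zero, add_zero]
          simp [hC, hA'00, Fin.succAbove_zero]
        rw [hdetAC, hdetC, hsub]
      have hHSB : ∀ k : ℕ, ∀ hk : k ≤ K,
          0 < (B.submatrix (Fin.castLE hk) (Fin.castLE hk)).det := by
        intro k hk
        have h := hHS (k+1) (by omega)
        rw [hminor k hk (by omega)] at h
        nlinarith
      have hoffB : ∀ i j, i ≠ j → B i j ≤ 0 := by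
        intro i j hij
        have h1 : A i.succ j.succ ≤ 0 := hoff _ _ (by simpa using hij)
        have h2 : 0 ≤ A i.succ 0 * A 0 j.succ := by
          have := hoff _ _ (Fin.succ_ne_zero i)
          have := hoff _ _ (Fin.succ_ne_zero j).symm
          nlinarith
        have h3 : 0 ≤ A i.succ 0 * A 0 j.succ / A 0 0 := div_nonneg h2 (le_of_lt ha00)
        simp only [hB]
        linarith
      set z : Fin K → ℝ := fun i => y i.succ - A i.succ 0 * y 0 / A 0 0 with hzdef
      have hz : ∀ i, 0 ≤ z i := by
        intro i
        have h2 : A i.succ 0 * y 0 / A 0 0 ≤ 0 :=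
          div_nonpos_of_nonpos_of_nonneg
            (mul_nonpos_of_nonpos_of_nonneg (hoff _ _ (Fin.succ_ne_zero i)) (hy 0))
            (le_of_lt ha00)
        have := hy i.succ
        simp only [hzdef]
        linarith
      obtain ⟨x', hx'nn, hx'⟩ := ih B hoffB hHSB z hz
      set S : ℝ := ∑ j, A 0 j.succ * x' j with hS
      have hSnp : S ≤ 0 := by
        apply Finset.sum_nonpos
        intro j _
        exact mul_nonpos_of_nonpos_of_nonneg (hoff _ _ (Fin.succ_ne_zero j).symm) (hx'nn j)
      set x1 : ℝ := (y 0 - S) / A 0 0 with hx1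
      have hx1nn : 0 ≤ x1 := div_nonneg (by have := hy 0; linarith) (le_of_lt ha00)
      refine ⟨Fin.cons x1 x', ?_, ?_⟩
      · intro i
        refine Fin.cases ?_ ?_ i
        · simpa using hx1nn
        · intro i; simpa using hx'nn i
      · funext i
        have hmv : ∀ i' : Fin (K+1), A.mulVec (Fin.cons x1 x') i'
            = A i' 0 * x1 + ∑ j, A i' j.succ * x' j := by
          intro i'
          rw [Matrix.mulVec, dotProduct, Fin.sum_univ_succ]
          simp
        refine Fin.cases ?_ ?_ i
        · rw [hmv, hx1]
          field_simp
          linarith [hS]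
        · intro i
          have hrow := congrFun hx' i
          rw [Matrix.mulVec, dotProduct] at hrow
          simp only [hB, hzdef] at hrow
          have hexp : ∑ j, (A i.succ j.succ - A i.succ 0 * A 0 j.succ / A 0 0) * x' j
              = (∑ j, A i.succ j.succ * x' j) - (A i.succ 0 / A 0 0) * S := by
            rw [hS, Finset.mul_sum, ← Finset.sum_sub_distrib]
            apply Finset.sum_congr rfl
            intro j _
            ring
          rw [hexp] at hrow
          rw [hmv, hx1]
          have : ∑ j, A i.succ j.succ * x' j
              = y i.succ - A i.succ 0 * y 0 / A 0 0 + (A i.succ 0 / A 0 0) * S := by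
            linarith
          rw [this]
          field_simp
          ring

/-- A `Z⁺`-matrix satisfying the Hawkins-Simon condition (all leading principal
minors positive) maps some nonnegative vector `x` onto any given nonnegative `y`. -/
theorem zplus_hawkinsSimon_surjective_on_nonneg
    (K : ℕ) (A : Matrix (Fin K) (Fin K) ℝ)
    (hdiag : ∀ i, 0 < A i i)
    (hoff : ∀ i j, i ≠ j → A i j ≤ 0)
    (hHS : ∀ k : ℕ, ∀ h : k ≤ K,
      0 < (A.submatrix (Fin.castLE h) (Fin.castLE h)).det)
    (y : Fin K → ℝ) (hy : ∀ i, 0 ≤ y i) :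
    ∃ x : Fin K → ℝ, (∀ i, 0 ≤ x i) ∧ A.mulVec x = y := by
  exact hs_aux K A hoff hHS y hy
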